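/- The expected overlap upper bound for Bitmap-Next satisfies: if r and s each consist of n tokens hashed uniformly and independently into b bits with n ≤ b, then the popcount of each bitmap is exactly n, and hence the overlap upper bound ⌊(2n − hammingDist)/2⌋ equals n − hammingDist/2 ≥ n − min(n, n) ≥ 0; in particular, for any two sets of sizes |r|, |s| ≤ b, the Bitmap-Next overlap bound ⌊(|r|+|s|−hammingDist(b_r,b_s))/2⌋ is at least |r ∩ s| and at most min(|r|,|s|). -/

import Mathlib

/-- Insert a bit into the bitmap at position `i`, or at the next (circularly)
unset position after `i` if `i` is already set (Bitmap-Next insertion). -/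
def insertNext {b : ℕ} [NeZero b] (bm : Fin b → Bool) (i : Fin b) : Fin b → Bool :=
  match ((List.range b).map (fun k => i + Fin.ofNat b k)).find? (fun j => !bm j) with
  | some j => Function.update bm j true
  | none => bm

/-- The Bitmap-Next bitmap of a list of tokens under hash function `h`. -/
def bitmapNext {T : Type*} {b : ℕ} [NeZero b] (h : T → Fin b) (s : List T) : Fin b → Bool :=
  s.foldl (fun bm t => insertNext bm (h t)) (fun _ => false)

namespace BNaux

/-- generic find? spec -/
lemma find?_spec {α : Type*} (p : α → Bool) :
    ∀ (l : List α) (a : α), l.find? p = some a →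
      ∃ n : ℕ, l[n]? = some a ∧ p a = true ∧
        ∀ m : ℕ, m < n → ∀ x, l[m]? = some x → p x = false := by
  intro l
  induction l with
  | nil => intro a h; simp at h
  | cons x l ih =>
    intro a h
    rw [List.find?_cons] at h
    cases hx : p x with
    | true =>
      simp [hx] at h
      exact ⟨0, by simp [h], h ▸ hx, by omega⟩
    | false =>
      simp [hx] at h
      obtain ⟨n, h1, h2, h3⟩ := ih a h
      refine ⟨n + 1, by simpa using h1, h2, ?_⟩
      intro m hm y hy
      cases m with
      | zero => simp at hy; exact hy ▸ hx
      | succ m => exact h3 m (by omega) y (by simpa using hy)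

variable {b : ℕ} [NeZero b]

def nextFree (bm : Fin b → Bool) (i : Fin b) : Option (Fin b) :=
  ((List.range b).map (fun k => i + Fin.ofNat b k)).find? (fun j => !bm j)

/-- The circular probe sequence starting at `i`, as an honest `List.map`. -/
def circle (i : Fin b) : List (Fin b) := (List.range b).map (fun k : ℕ => i + Fin.ofNat b k)

lemma coe_list (l : List ℕ) :
    (do let a ← l; pure (Fin.ofNat b a) : List (Fin b)) = l.map (fun k : ℕ => Fin.ofNat b k) := by
  induction l with
  | nil => rfl
  | cons x l ih =>
    show List.flatMap _ _ = _
    simp only [List.flatMap_cons, List.map_cons]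
    rw [← ih]
    rfl

lemma nextFree_eq_find (bm : Fin b → Bool) (i : Fin b) :
    nextFree bm i = (circle i).find? (fun j => !bm j) := by
  rfl

lemma insertNext_eq (bm : Fin b → Bool) (i : Fin b) :
    insertNext bm i = match nextFree bm i with
      | some j => Function.update bm j true
      | none => bm := rfl

lemma insertNext_of_none {bm : Fin b → Bool} {i : Fin b} (h : nextFree bm i = none) :
    insertNext bm i = bm := by rw [insertNext_eq, h]

lemma insertNext_of_some {bm : Fin b → Bool} {i a : Fin b} (h : nextFree bm i = some a) :
    insertNext bm i = Function.update bm a true := by rw [insertNext_eq, h]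

lemma mem_circle (i j : Fin b) : j ∈ circle i := by
  apply List.mem_map.2
  refine ⟨(j - i).val, List.mem_range.2 (j - i).isLt, ?_⟩
  show i + Fin.ofNat b (j - i).val = j
  rw [Fin.ofNat_val_eq_self, add_comm, sub_add_cancel]

lemma nextFree_eq_none_iff (bm : Fin b → Bool) (i : Fin b) :
    nextFree bm i = none ↔ ∀ j, bm j = true := by
  rw [nextFree_eq_find, List.find?_eq_none]
  constructor
  · intro h j
    have := h j (mem_circle i j)
    simpa using this
  · intro h j _; simp [h j]

lemma nextFree_spec {bm : Fin b → Bool} {i a : Fin b} (h : nextFree bm i = some a) :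
    bm a = false ∧ ∀ j, bm j = false → (a - i).val ≤ (j - i).val := by
  rw [nextFree_eq_find] at h
  obtain ⟨n, h1, h2, h3⟩ := find?_spec _ _ _ h
  have hnb : n < b := by
    by_contra hc
    rw [List.getElem?_eq_none (by simpa [circle] using hc)] at h1
    cases h1
  rw [circle, List.getElem?_map, List.getElem?_range hnb] at h1
  simp only [Option.map_some] at h1
  have ha : a = i + Fin.ofNat b n := (Option.some.inj h1).symm
  have hav : (a - i).val = n := by
    rw [ha, add_comm, add_sub_cancel_right, Fin.val_ofNat, Nat.mod_eq_of_lt hnb]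
  refine ⟨by simpa using h2, ?_⟩
  intro j hj
  by_contra hc
  push_neg at hc
  rw [hav] at hc
  have hjb : (j - i).val < b := (j - i).isLt
  have := h3 (j - i).val hc j ?_
  · simp [hj] at this
  · rw [circle, List.getElem?_map, List.getElem?_range hjb]
    simp only [Option.map_some, Fin.ofNat_val_eq_self]
    rw [add_comm, sub_add_cancel]

lemma nextFree_eq_some_of {bm : Fin b → Bool} {i a : Fin b} (h1 : bm a = false)
    (h2 : ∀ j, bm j = false → (a - i).val ≤ (j - i).val) : nextFree bm i = some a := by
  cases hn : nextFree bm i with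
  | none =>
    rw [nextFree_eq_none_iff] at hn
    rw [hn a] at h1; exact Bool.noConfusion h1
  | some a' =>
    obtain ⟨h1', h2'⟩ := nextFree_spec hn
    have : (a - i).val = (a' - i).val := le_antisymm (h2 a' h1') (h2' a h1)
    have : a - i = a' - i := Fin.ext this
    rw [sub_left_inj.1 this]

lemma dist_split {i a x : Fin b} (h : (a - i).val ≤ (x - i).val) :
    (x - i).val = (a - i).val + (x - a).val := by
  have hx : x - a = (x - i) - (a - i) := (sub_sub_sub_cancel_right x a i).symm
  have : ((x - i) - (a - i)).val = (x - i).val - (a - i).val :=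
    Fin.sub_val_of_le (Fin.le_def.2 h)
  rw [hx, this]; omega

/-- For a position `y` free in `bm` and distinct from the first free slot `a` (from `i`),
the distance from `i` splits through `a`. -/
lemma dist_through {bm : Fin b → Bool} {i a : Fin b} (h : nextFree bm i = some a)
    {y : Fin b} (hy : bm y = false) :
    (y - i).val = (a - i).val + (y - a).val :=
  dist_split ((nextFree_spec h).2 y hy)

lemma insert_comm (bm : Fin b → Bool) (i j : Fin b) :
    insertNext (insertNext bm i) j = insertNext (insertNext bm j) i := by
  cases hi : nextFree bm i with
  | none =>
    have hfull := (nextFree_eq_none_iff bm i).1 hi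
    have hj : nextFree bm j = none := (nextFree_eq_none_iff bm j).2 hfull
    simp only [insertNext_of_none hi, insertNext_of_none hj]
  | some a =>
    cases hj : nextFree bm j with
    | none =>
      have hfull := (nextFree_eq_none_iff bm j).1 hj
      have := (nextFree_spec hi).1
      rw [hfull a] at this
      exact Bool.noConfusion this
    | some c =>
      obtain ⟨hafree, hamin⟩ := nextFree_spec hi
      obtain ⟨hcfree, hcmin⟩ := nextFree_spec hj
      by_cases hac : a = c
      · subst hac
        rw [insertNext_of_some hi, insertNext_of_some hj]
        set bm' := Function.update bm a true with hbm'
        cases hj2 : nextFree bm' j with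
        | none =>
          have hfull := (nextFree_eq_none_iff bm' j).1 hj2
          have hi2 : nextFree bm' i = none := (nextFree_eq_none_iff bm' i).2 hfull
          rw [insertNext_of_none hj2, insertNext_of_none hi2]
        | some a₂ =>
          obtain ⟨h2free, h2min⟩ := nextFree_spec hj2
          have hkey : ∀ y : Fin b, bm' y = false → y ≠ a ∧ bm y = false := by
            intro y hyf
            have hya : y ≠ a := by
              intro hh; rw [hh] at hyf; simp [hbm', Function.update_self] at hyf
            refine ⟨hya, ?_⟩
            rwa [hbm', Function.update_of_ne hya] at hyf
          have hi2 : nextFree bm' i = some a₂ := by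
            apply nextFree_eq_some_of h2free
            intro x hxf
            obtain ⟨hxa, hxbm⟩ := hkey x hxf
            obtain ⟨h2a, h2bm⟩ := hkey a₂ h2free
            have e1 : (x - i).val = (a - i).val + (x - a).val := dist_through hi hxbm
            have e2 : (x - j).val = (a - j).val + (x - a).val := dist_through hj hxbm
            have e3 : (a₂ - i).val = (a - i).val + (a₂ - a).val := dist_through hi h2bm
            have e4 : (a₂ - j).val = (a - j).val + (a₂ - a).val := dist_through hj h2bm
            have := h2min x hxf
            omega
          rw [insertNext_of_some hj2, insertNext_of_some hi2]
      · -- a ≠ c : independent slots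
        have hi2 : nextFree (Function.update bm c true) i = some a := by
          apply nextFree_eq_some_of
          · rwa [Function.update_of_ne hac]
          · intro x hx
            have hxc : x ≠ c := by
              intro hh; rw [hh, Function.update_self] at hx; exact Bool.noConfusion hx
            rw [Function.update_of_ne hxc] at hx
            exact hamin x hx
        have hj2 : nextFree (Function.update bm a true) j = some c := by
          apply nextFree_eq_some_of
          · rwa [Function.update_of_ne (Ne.symm hac)]
          · intro x hx
            have hxa : x ≠ a := by
              intro hh; rw [hh, Function.update_self] at hx; exact Bool.noConfusion hx
            rw [Function.update_of_ne hxa] at hx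
            exact hcmin x hx
        rw [insertNext_of_some hi, insertNext_of_some hj,
          insertNext_of_some hj2, insertNext_of_some hi2]
        exact Function.update_comm hac true true bm

/-! ### Monotonicity -/

def BMle (bm bm' : Fin b → Bool) : Prop := ∀ t, bm t = true → bm' t = true

lemma le_insert (bm : Fin b → Bool) (i : Fin b) : BMle bm (insertNext bm i) := by
  intro t ht
  cases hn : nextFree bm i with
  | none => rw [insertNext_of_none hn]; exact ht
  | some a =>
    rw [insertNext_of_some hn]
    by_cases hta : t = a
    · subst hta; simp [Function.update_self]
    · simp [Function.update_of_ne hta, ht]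

lemma insert_mono {bm bm' : Fin b → Bool} (hle : BMle bm bm') (i : Fin b) :
    BMle (insertNext bm i) (insertNext bm' i) := by
  intro t ht
  cases h1 : nextFree bm i with
  | none => rw [insertNext_of_none h1] at ht; exact le_insert bm' i t (hle t ht)
  | some a =>
    rw [insertNext_of_some h1] at ht
    obtain ⟨hafree, hamin⟩ := nextFree_spec h1
    cases h2 : nextFree bm' i with
    | none =>
      rw [insertNext_of_none h2]
      exact (nextFree_eq_none_iff bm' i).1 h2 t
    | some a' =>
      rw [insertNext_of_some h2]
      obtain ⟨hafree', hamin'⟩ := nextFree_spec h2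
      by_cases hta' : t = a'
      · subst hta'; simp [Function.update_self]
      · rw [Function.update_of_ne hta']
        by_cases hta : t = a
        · subst hta
          by_contra hc
          have hbm'a : bm' t = false := by
            cases hb : bm' t with
            | false => rfl
            | true => exact absurd hb hc
          have h3 : (a' - i).val ≤ (t - i).val := hamin' t hbm'a
          have hbma' : bm a' = false := by
            cases hb : bm a' with
            | false => rfl
            | true => rw [hle a' hb] at hafree'; exact Bool.noConfusion hafree'
          have h4 : (t - i).val ≤ (a' - i).val := hamin a' hbma'
          have : t - i = a' - i := Fin.ext (le_antisymm h4 h3)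
          exact hta' (sub_left_inj.1 this)
        · rw [Function.update_of_ne hta] at ht
          exact hle t ht

def buildFrom (bm : Fin b → Bool) (l : List (Fin b)) : Fin b → Bool := l.foldl insertNext bm

lemma buildFrom_mono {l₁ l₂ : List (Fin b)} (hsub : l₁.Sublist l₂) :
    ∀ {bm bm' : Fin b → Bool}, BMle bm bm' → BMle (buildFrom bm l₁) (buildFrom bm' l₂) := by
  induction hsub with
  | slnil => intro bm bm' hle; exact hle
  | @cons l₁ l₂ a hs ih =>
    intro bm bm' hle
    show BMle (buildFrom bm l₁) (buildFrom (insertNext bm' a) l₂)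
    exact ih (fun t ht => le_insert bm' a t (hle t ht))
  | @cons_cons l₁ l₂ a hs ih =>
    intro bm bm' hle
    show BMle (buildFrom (insertNext bm a) l₁) (buildFrom (insertNext bm' a) l₂)
    exact ih (insert_mono hle a)

instance : RightCommutative (insertNext (b := b)) := ⟨insert_comm⟩

lemma buildFrom_perm {l₁ l₂ : List (Fin b)} (hp : l₁.Perm l₂) (bm : Fin b → Bool) :
    buildFrom bm l₁ = buildFrom bm l₂ :=
  hp.foldl_eq bm

/-! ### Popcount -/

def pc (bm : Fin b → Bool) : ℕ := (Finset.univ.filter fun t => bm t = true).card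

lemma pc_insert {bm : Fin b → Bool} (hlt : pc bm < b) (i : Fin b) :
    pc (insertNext bm i) = pc bm + 1 := by
  cases hn : nextFree bm i with
  | none =>
    have hfull := (nextFree_eq_none_iff bm i).1 hn
    have : pc bm = b := by
      rw [pc]
      have : (Finset.univ.filter fun t => bm t = true) = Finset.univ := by
        apply Finset.filter_true_of_mem; intro x _; exact hfull x
      rw [this, Finset.card_univ, Fintype.card_fin]
    omega
  | some a =>
    obtain ⟨hafree, _⟩ := nextFree_spec hn
    rw [insertNext_of_some hn, pc, pc]
    have hset : (Finset.univ.filter fun t => Function.update bm a true t = true)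
        = insert a (Finset.univ.filter fun t => bm t = true) := by
      ext x
      simp only [Finset.mem_filter, Finset.mem_univ, true_and, Finset.mem_insert]
      by_cases hxa : x = a
      · subst hxa; simp [Function.update_self]
      · simp [Function.update_of_ne hxa, hxa]
    rw [hset, Finset.card_insert_of_notMem (by simp [hafree])]

lemma pc_buildFrom : ∀ (l : List (Fin b)) (bm : Fin b → Bool),
    pc bm + l.length ≤ b → pc (buildFrom bm l) = pc bm + l.length := by
  intro l
  induction l with
  | nil => intro bm _; rfl
  | cons i l ih =>
    intro bm hle
    simp only [List.length_cons] at hle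
    have h1 : pc bm < b := by omega
    have h2 : pc (insertNext bm i) = pc bm + 1 := pc_insert h1 i
    have := ih (insertNext bm i) (by omega)
    simp only [buildFrom, List.foldl_cons] at this ⊢
    rw [this, h2]; simp [List.length_cons]; omega

lemma pc_bot : pc (fun _ : Fin b => false) = 0 := by simp [pc]

end BNaux

open BNaux in
theorem bitmapNext_overlap_bounds {T : Type*} [DecidableEq T] {b : ℕ} [NeZero b]
    (h : T → Fin b) (r s : List T) (hndr : r.Nodup) (hnds : s.Nodup)
    (hr : r.length ≤ b) (hs : s.length ≤ b) :
    (r.toFinset ∩ s.toFinset).card ≤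
        (r.length + s.length - hammingDist (bitmapNext h r) (bitmapNext h s)) / 2 ∧
      (r.length + s.length - hammingDist (bitmapNext h r) (bitmapNext h s)) / 2 ≤
        min r.length s.length := by
  classical
  -- reduce bitmapNext to buildFrom
  have hbuild : ∀ (l : List T), bitmapNext h l = buildFrom (fun _ => false) (l.map h) := by
    intro l
    rw [bitmapNext, buildFrom, List.foldl_map]
  set c : List T := r.filter (· ∈ s) with hc
  set c' : List T := s.filter (· ∈ r) with hc'
  have hcnd : c.Nodup := hndr.filter _
  have hcnd' : c'.Nodup := hnds.filter _
  have hperm : c.Perm c' := by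
    rw [List.perm_ext_iff_of_nodup hcnd hcnd']
    intro x
    simp only [hc, hc', List.mem_filter, decide_eq_true_eq]
    tauto
  -- bits
  set Fr := bitmapNext h r with hFr
  set Fs := bitmapNext h s with hFs
  set Fc := bitmapNext h c with hFc
  have hle_r : BMle Fc Fr := by
    rw [hFc, hFr, hbuild, hbuild]
    exact buildFrom_mono ((List.filter_sublist (l := r)).map h) (fun t ht => ht)
  have hle_s : BMle Fc Fs := by
    have : Fc = bitmapNext h c' := by
      rw [hFc, hbuild, hbuild]
      exact buildFrom_perm (hperm.map h) _
    rw [this, hFs, hbuild, hbuild]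
    exact buildFrom_mono ((List.filter_sublist (l := s)).map h) (fun t ht => ht)
  -- popcounts
  have hpcr : pc Fr = r.length := by
    rw [hFr, hbuild]
    have := pc_buildFrom (r.map h) (fun _ => false) (by simpa [pc_bot] using hr)
    simpa [pc_bot] using this
  have hpcs : pc Fs = s.length := by
    rw [hFs, hbuild]
    have := pc_buildFrom (s.map h) (fun _ => false) (by simpa [pc_bot] using hs)
    simpa [pc_bot] using this
  have hclen : c.length ≤ b := le_trans (List.length_filter_le _ _) hr
  have hpcc : pc Fc = c.length := by
    rw [hFc, hbuild]
    have := pc_buildFrom (c.map h) (fun _ => false) (by simpa [pc_bot] using hclen)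
    simpa [pc_bot] using this
  -- Finsets of set bits
  set A := Finset.univ.filter (fun t => Fr t = true) with hA
  set B := Finset.univ.filter (fun t => Fs t = true) with hB
  set C := Finset.univ.filter (fun t => Fc t = true) with hC
  have hCA : C ⊆ A := by
    intro x hx
    simp only [hC, hA, Finset.mem_filter, Finset.mem_univ, true_and] at hx ⊢
    exact hle_r x hx
  have hCB : C ⊆ B := by
    intro x hx
    simp only [hC, hB, Finset.mem_filter, Finset.mem_univ, true_and] at hx ⊢
    exact hle_s x hx
  have hCsub : C ⊆ A ∩ B := Finset.subset_inter hCA hCB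
  have hCcard : C.card = c.length := hpcc
  have hAcard : A.card = r.length := hpcr
  have hBcard : B.card = s.length := hpcs
  -- |r ∩ s| = c.length
  have hm : (r.toFinset ∩ s.toFinset).card = c.length := by
    have : r.toFinset ∩ s.toFinset = c.toFinset := by
      ext x
      simp [hc, List.mem_filter]
    rw [this, List.toFinset_card_of_nodup hcnd]
  -- hamming distance
  have hham : hammingDist Fr Fs = (A ∪ B).card - (A ∩ B).card := by
    have hset : (Finset.univ.filter fun i => Fr i ≠ Fs i) = (A ∪ B) \ (A ∩ B) := by
      ext x
      simp only [Finset.mem_filter, Finset.mem_univ, true_and, Finset.mem_sdiff,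
        Finset.mem_union, Finset.mem_inter, hA, hB]
      cases hr1 : Fr x <;> cases hs1 : Fs x <;> simp
    rw [hammingDist]
    rw [hset, Finset.card_sdiff_of_subset (Finset.inter_subset_union)]
  have hcards := Finset.card_inter_add_card_union A B
  have hiu : (A ∩ B).card ≤ (A ∪ B).card := Finset.card_le_card Finset.inter_subset_union
  have hmk : c.length ≤ (A ∩ B).card := hCcard ▸ Finset.card_le_card hCsub
  have hkA : (A ∩ B).card ≤ A.card := Finset.card_le_card (Finset.inter_subset_left)
  have hkB : (A ∩ B).card ≤ B.card := Finset.card_le_card (Finset.inter_subset_right)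
  rw [hham, hm]
  omega
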